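/- If for every atom a in the disagreement set ds π π' we have ∇ ⊢ a # t, then ∇ ⊢ π • t ≈ π' • t; and conversely, if ∇ ⊢ π • t ≈ π' • t then ∇ ⊢ a # t for every a ∈ ds π π'. -/
import Mathlib


abbrev Atom := ℕ
abbrev Var := ℕ
abbrev Perm := List (Atom × Atom)

def swap (p : Atom × Atom) (a : Atom) : Atom :=
  if a = p.1 then p.2 else if a = p.2 then p.1 else a

def permAtom : Perm → Atom → Atom
  | [], a => a
  | p :: π, a => swap p (permAtom π a)

def ds (π π' : Perm) : Set Atom := {a | permAtom π a ≠ permAtom π' a}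

inductive Trm : Type
  | unit : Trm
  | pair : Trm → Trm → Trm
  | fn : ℕ → Trm → Trm
  | atom : Atom → Trm
  | abs : Atom → Trm → Trm
  | susp : Perm → Var → Trm

def permTrm (π : Perm) : Trm → Trm
  | .unit => .unit
  | .pair t₁ t₂ => .pair (permTrm π t₁) (permTrm π t₂)
  | .fn f t => .fn f (permTrm π t)
  | .atom a => .atom (permAtom π a)
  | .abs a t => .abs (permAtom π a) (permTrm π t)
  | .susp π' X => .susp (π ++ π') X

abbrev Env := Set (Atom × Var)

inductive fresh (Γ : Env) (a : Atom) : Trm → Prop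
  | unit : fresh Γ a .unit
  | pair {t₁ t₂} : fresh Γ a t₁ → fresh Γ a t₂ → fresh Γ a (.pair t₁ t₂)
  | fn {f t} : fresh Γ a t → fresh Γ a (.fn f t)
  | abs₁ {t} : fresh Γ a (.abs a t)
  | abs₂ {b t} : a ≠ b → fresh Γ a t → fresh Γ a (.abs b t)
  | atom {b} : a ≠ b → fresh Γ a (.atom b)
  | susp {π X} : (permAtom π.reverse a, X) ∈ Γ → fresh Γ a (.susp π X)

inductive equ (Γ : Env) : Trm → Trm → Prop
  | unit : equ Γ .unit .unit
  | pair {t₁ t₂ s₁ s₂} : equ Γ t₁ t₂ → equ Γ s₁ s₂ → equ Γ (.pair t₁ s₁) (.pair t₂ s₂)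
  | fn {f t₁ t₂} : equ Γ t₁ t₂ → equ Γ (.fn f t₁) (.fn f t₂)
  | abs₁ {a t₁ t₂} : equ Γ t₁ t₂ → equ Γ (.abs a t₁) (.abs a t₂)
  | abs₂ {a b t₁ t₂} : a ≠ b → fresh Γ a t₂ → equ Γ t₁ (permTrm [(a, b)] t₂) →
      equ Γ (.abs a t₁) (.abs b t₂)
  | atom {a} : equ Γ (.atom a) (.atom a)
  | susp {π π' X} : (∀ c ∈ ds π π', (c, X) ∈ Γ) → equ Γ (.susp π X) (.susp π' X)

inductive weak : Trm → Trm → Prop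
  | unit : weak .unit .unit
  | atom {a} : weak (.atom a) (.atom a)
  | fn {f t t'} : weak t t' → weak (.fn f t) (.fn f t')
  | pair {t₁ t₂ s₁ s₂} : weak t₁ s₁ → weak t₂ s₂ → weak (.pair t₁ t₂) (.pair s₁ s₂)
  | abs {a t t'} : weak t t' → weak (.abs a t) (.abs a t')
  | susp {π π' X} : ds π π' = ∅ → weak (.susp π X) (.susp π' X)

def subst (σ : Var → Option Trm) : Trm → Trm
  | .unit => .unit
  | .pair t₁ t₂ => .pair (subst σ t₁) (subst σ t₂)
  | .fn f t => .fn f (subst σ t)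
  | .atom a => .atom a
  | .abs a t => .abs a (subst σ t)
  | .susp π X =>
      match σ X with
      | some t => permTrm π t
      | none => .susp π X

lemma swap_swap (p : Atom × Atom) (a : Atom) : swap p (swap p a) = a := by
  unfold swap; split_ifs <;> simp_all

lemma permAtom_append (π π' : Perm) (a : Atom) :
    permAtom (π ++ π') a = permAtom π (permAtom π' a) := by
  induction π with
  | nil => rfl
  | cons p π ih => simp [permAtom, ih]

lemma permAtom_rev_left (π : Perm) (a : Atom) :
    permAtom π.reverse (permAtom π a) = a := by
  induction π with
  | nil => rfl
  | cons p π ih =>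
    simp only [permAtom, List.reverse_cons, permAtom_append]
    show permAtom π.reverse (swap p (permAtom [] (swap p (permAtom π a)))) = a
    simpa [permAtom, swap_swap] using ih

lemma permAtom_rev_right (π : Perm) (a : Atom) :
    permAtom π (permAtom π.reverse a) = a := by
  have := permAtom_rev_left π.reverse a
  simpa using this

lemma permAtom_inj (π : Perm) {a b : Atom} (h : permAtom π a = permAtom π b) : a = b := by
  have := congrArg (permAtom π.reverse) h
  simpa [permAtom_rev_left] using this

lemma permTrm_append (π π' : Perm) (t : Trm) :
    permTrm π (permTrm π' t) = permTrm (π ++ π') t := by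
  induction t with
  | unit => rfl
  | pair t₁ t₂ ih₁ ih₂ => simp [permTrm, ih₁, ih₂]
  | fn f t ih => simp [permTrm, ih]
  | atom a => simp [permTrm, permAtom_append]
  | abs a t ih => simp [permTrm, permAtom_append, ih]
  | susp ρ X => simp [permTrm, List.append_assoc]

lemma fresh_perm {Γ : Env} {a : Atom} {t : Trm} (π : Perm) (h : fresh Γ a t) :
    fresh Γ (permAtom π a) (permTrm π t) := by
  induction h with
  | unit => exact .unit
  | pair _ _ ih₁ ih₂ => exact .pair ih₁ ih₂
  | fn _ ih => exact .fn ih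
  | abs₁ => exact .abs₁
  | abs₂ hne _ ih => exact .abs₂ (fun h => hne (permAtom_inj π h)) ih
  | atom hne => exact .atom (fun h => hne (permAtom_inj π h))
  | susp hmem =>
    refine .susp ?_
    simpa [List.reverse_append, permAtom_append, permAtom_rev_left] using hmem

lemma fresh_abs_cases {Γ : Env} {c d : Atom} {t : Trm}
    (h : fresh Γ c (.abs d t)) : c = d ∨ fresh Γ c t := by
  cases h with
  | abs₁ => exact Or.inl rfl
  | abs₂ _ hf => exact Or.inr hf

lemma equ_abs_cases {Γ : Env} {a b : Atom} {t₁ t₂ : Trm}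
    (h : equ Γ (.abs a t₁) (.abs b t₂)) :
    (a = b ∧ equ Γ t₁ t₂) ∨ (a ≠ b ∧ fresh Γ a t₂ ∧ equ Γ t₁ (permTrm [(a, b)] t₂)) := by
  cases h with
  | abs₁ h' => exact Or.inl ⟨rfl, h'⟩
  | abs₂ hne hf h' => exact Or.inr ⟨hne, hf, h'⟩

lemma equ_atom_inv {Γ : Env} {a b : Atom} (h : equ Γ (.atom a) (.atom b)) : a = b := by
  cases h; rfl

lemma fresh_perm_rev {Γ : Env} {a : Atom} (π : Perm) (t : Trm)
    (h : fresh Γ (permAtom π a) (permTrm π t)) : fresh Γ a t := by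
  induction t generalizing a with
  | unit => exact .unit
  | pair t₁ t₂ ih₁ ih₂ =>
    cases h with
    | pair h₁ h₂ => exact .pair (ih₁ h₁) (ih₂ h₂)
  | fn f t ih => cases h with | fn h => exact .fn (ih h)
  | atom b =>
    cases h with
    | atom hne => exact .atom (fun h => hne (by rw [h]))
  | abs b t ih =>
    rcases fresh_abs_cases h with heq | hf
    · have : a = b := permAtom_inj π heq
      subst this; exact .abs₁
    · by_cases hab : a = b
      · subst hab; exact .abs₁
      · exact .abs₂ hab (ih hf)
  | susp ρ X =>
    cases h with
    | susp hmem =>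
      refine .susp ?_
      simpa [List.reverse_append, permAtom_append, permAtom_rev_left] using hmem

lemma fresh_abs_inv {Γ : Env} {c a : Atom} {t : Trm}
    (h : fresh Γ c (.abs a t)) (hne : c ≠ a) : fresh Γ c t := by
  cases h with
  | abs₁ => exact absurd rfl hne
  | abs₂ _ hf => exact hf

lemma ds_fresh_equ_fwd (Γ : Env) (t : Trm) : ∀ π π' : Perm,
    (∀ a ∈ ds π π', fresh Γ a t) → equ Γ (permTrm π t) (permTrm π' t) := by
  induction t with
  | unit => intro π π' _; exact .unit
  | pair t₁ t₂ ih₁ ih₂ =>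
    intro π π' h
    refine .pair (ih₁ _ _ fun a ha => ?_) (ih₂ _ _ fun a ha => ?_) <;>
      cases h a ha <;> assumption
  | fn f t ih =>
    intro π π' h
    refine .fn (ih _ _ fun a ha => ?_)
    cases h a ha; assumption
  | atom b =>
    intro π π' h
    have hb : permAtom π b = permAtom π' b := by
      by_contra hne
      cases h b hne with
      | atom h' => exact h' rfl
    simp only [permTrm, hb]
    exact .atom
  | abs a t ih =>
    intro π π' h
    simp only [permTrm]
    by_cases heq : permAtom π a = permAtom π' a
    · rw [heq]
      refine .abs₁ (ih _ _ fun c hc => ?_)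
      have hca : c ≠ a := fun h' => by subst h'; exact hc heq
      exact fresh_abs_inv (h c hc) hca
    · -- π a ≠ π' a
      have ha : a ∈ ds π π' := heq
      set b := permAtom π'.reverse (permAtom π a) with hb
      have hπ'b : permAtom π' b = permAtom π a := permAtom_rev_right π' _
      have hba : b ≠ a := by
        intro h'; rw [h'] at hπ'b; exact heq hπ'b.symm
      have hbds : b ∈ ds π π' := by
        intro h'
        rw [hπ'b] at h'
        exact hba (permAtom_inj π h')
      have hfb : fresh Γ b t := fresh_abs_inv (h b hbds) hba
      have hfresh : fresh Γ (permAtom π a) (permTrm π' t) := by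
        rw [← hπ'b]; exact fresh_perm π' hfb
      refine .abs₂ heq hfresh ?_
      rw [permTrm_append]
      have : ((permAtom π a, permAtom π' a) :: π' : Perm)
          = [(permAtom π a, permAtom π' a)] ++ π' := rfl
      rw [← this]
      refine ih π ((permAtom π a, permAtom π' a) :: π') fun c hc => ?_
      have hca : c ≠ a := by
        intro h'; subst h'
        apply hc
        show permAtom π c = swap (permAtom π c, permAtom π' c) (permAtom π' c)
        simp only [swap]
        rw [if_neg (fun hh => heq hh.symm)]
        simp
      refine fresh_abs_inv (h c ?_) hca
      intro h'
      apply hc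
      show permAtom π c = swap (permAtom π a, permAtom π' a) (permAtom π' c)
      have h1 : permAtom π' c ≠ permAtom π a := by
        rw [← h']; exact fun hh => hca (permAtom_inj π hh)
      have h2 : permAtom π' c ≠ permAtom π' a := fun hh => hca (permAtom_inj π' hh)
      rw [show swap (permAtom π a, permAtom π' a) (permAtom π' c) = permAtom π' c by
        simp [swap, h1, h2]]
      exact h'
  | susp ρ X =>
    intro π π' h
    simp only [permTrm]
    refine .susp fun d hd => ?_
    have hρd : permAtom ρ d ∈ ds π π' := by
      intro h'
      apply hd
      show permAtom (π ++ ρ) d = permAtom (π' ++ ρ) d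
      rw [permAtom_append, permAtom_append, h']
    have := h _ hρd
    cases this with
    | susp hmem =>
      rwa [permAtom_rev_left] at hmem

lemma ds_fresh_equ_bwd (Γ : Env) (t : Trm) : ∀ π π' : Perm,
    equ Γ (permTrm π t) (permTrm π' t) → ∀ a ∈ ds π π', fresh Γ a t := by
  induction t with
  | unit => intro π π' _ a _; exact .unit
  | pair t₁ t₂ ih₁ ih₂ =>
    intro π π' h a ha
    cases h with
    | pair h₁ h₂ => exact .pair (ih₁ _ _ h₁ a ha) (ih₂ _ _ h₂ a ha)
  | fn f t ih =>
    intro π π' h a ha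
    cases h with
    | fn h' => exact .fn (ih _ _ h' a ha)
  | atom b =>
    intro π π' h a ha
    refine .atom fun h' => ?_
    subst h'
    exact ha (congrArg Trm.atom (equ_atom_inv h) |> fun hh => by injection hh)
  | abs b t ih =>
    intro π π' h a ha
    by_cases hab : a = b
    · subst hab; exact .abs₁
    refine .abs₂ hab ?_
    rcases equ_abs_cases h with ⟨_, h'⟩ | ⟨hne, hf, h'⟩
    · exact ih _ _ h' a ha
    · 
      rw [permTrm_append] at h'
      have hIH := ih π ((permAtom π b, permAtom π' b) :: π') h'
      by_cases hc : permAtom π a = swap (permAtom π b, permAtom π' b) (permAtom π' a)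
      · -- then permAtom π' a = permAtom π b
        have h1 : permAtom π' a ≠ permAtom π' b := fun hh => hab (permAtom_inj π' hh)
        have h2 : permAtom π' a = permAtom π b := by
          by_contra h3
          rw [show swap (permAtom π b, permAtom π' b) (permAtom π' a) = permAtom π' a by
            simp [swap, h3, h1]] at hc
          exact ha hc
        refine fresh_perm_rev π' t ?_
        rw [h2]
        exact hf
      · exact hIH a hc
  | susp ρ X =>
    intro π π' h a ha
    cases h with
    | susp hmem =>
      refine .susp ?_
      have hd : permAtom ρ.reverse a ∈ ds (π ++ ρ) (π' ++ ρ) := by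
        show permAtom (π ++ ρ) _ ≠ permAtom (π' ++ ρ) _
        rw [permAtom_append, permAtom_append, permAtom_rev_right]
        exact ha
      exact hmem _ hd

theorem ds_fresh_equ (Γ : Env) (π π' : Perm) (t : Trm) :
    (∀ a ∈ ds π π', fresh Γ a t) ↔ equ Γ (permTrm π t) (permTrm π' t) :=
  ⟨ds_fresh_equ_fwd Γ t π π', fun h => ds_fresh_equ_bwd Γ t π π' h⟩
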